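/- arXiv:2210.02076 — 2 statements merged into one kernel-verified Lean document; each statement's English description precedes it below -/
import Mathlib

section
/- Let k be an algebraically closed field of characteristic zero and let d ≥ 3. The polynomial x^d + y^d + 1 ∈ k[x,y] is irreducible; let K := Frac(k[x,y]/(x^d + y^d + 1)) be the function field of the Fermat curve X^d + Y^d + Z^d = 0, and let x denote the image of x in K. Then the extension K/k(x) is a Galois extension of degree d with cyclic Galois group. (Equivalently: the point (0:1:0) is an outer Galois point for the Fermat curve of degree d.) -/
open MvPolynomial

/-- The dehomogenization `f(x,y) = F(x,y,1)` of a homogeneous polynomial in three variables. -/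
noncomputable def dehom {k : Type*} [CommSemiring k] (F : MvPolynomial (Fin 3) k) :
    MvPolynomial (Fin 2) k :=
  MvPolynomial.aeval ![MvPolynomial.X 0, MvPolynomial.X 1, 1] F

/-- `K`, together with elements `x y : K`, is (a copy of) the function field
`Frac(k[x,y]/(F(x,y,1)))` of the plane curve `{F = 0}`. -/
def IsFunctionFieldOf (k : Type*) {K : Type*} [Field k] [Field K] [Algebra k K]
    (F : MvPolynomial (Fin 3) k) (x y : K) : Prop :=
  IntermediateField.adjoin k {x, y} = ⊤ ∧
    ∀ g : MvPolynomial (Fin 2) k, MvPolynomial.aeval ![x, y] g = 0 ↔ dehom F ∣ g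

/-- The projection with fibre field `k(u)` is Galois of degree `d`. -/
def IsGaloisProjection (k : Type*) {K : Type*} [Field k] [Field K] [Algebra k K]
    (u : K) (d : ℕ) : Prop :=
  IsGalois (IntermediateField.adjoin k {u}) K ∧
    Module.finrank (IntermediateField.adjoin k {u}) K = d

/-- The Galois group of the projection corresponding to `k(u) ⊆ K`, viewed as the subgroup
of `Aut_k(K)` fixing `k(u)` elementwise. -/
def galGroup (k : Type*) {K : Type*} [Field k] [Field K] [Algebra k K] (u : K) :
    Subgroup (K ≃ₐ[k] K) :=
  (IntermediateField.adjoin k {u}).fixingSubgroup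

/-- The Fermat polynomial `X^d + Y^d + Z^d`. -/
noncomputable def fermatPoly (k : Type*) [CommSemiring k] (d : ℕ) : MvPolynomial (Fin 3) k :=
  MvPolynomial.X 0 ^ d + MvPolynomial.X 1 ^ d + MvPolynomial.X 2 ^ d

/-- `F` is projectively equivalent to the Fermat curve of degree `d`:
`F((X,Y,Z)·A) = c (X^d+Y^d+Z^d)` for some invertible matrix `A` and `c ≠ 0`. -/
def ProjEquivToFermat {k : Type*} [Field k] (d : ℕ) (F : MvPolynomial (Fin 3) k) : Prop :=
  ∃ A : Matrix (Fin 3) (Fin 3) k, IsUnit A.det ∧ ∃ c : k, c ≠ 0 ∧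
    MvPolynomial.aeval (fun i => ∑ j, MvPolynomial.C (A j i) * MvPolynomial.X j) F =
      MvPolynomial.C c * fermatPoly k d

/-- `K` is not isomorphic, as a `k`-algebra, to the rational function field `k(t)`. -/
noncomputable def NotRational (k K : Type*) [Field k] [Field K] [Algebra k K] : Prop :=
  ¬ Nonempty (K ≃ₐ[k] RatFunc k)


/-- `k[X][Y] → k[X₀,X₁]`, sending inner `X ↦ X₀`, outer `X ↦ X₁`. -/
noncomputable def toMv (k : Type*) [CommSemiring k] :
    Polynomial (Polynomial k) →+* MvPolynomial (Fin 2) k :=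
  Polynomial.eval₂RingHom (Polynomial.eval₂RingHom MvPolynomial.C (MvPolynomial.X 0))
    (MvPolynomial.X 1)

noncomputable def toPP (k : Type*) [CommSemiring k] :
    MvPolynomial (Fin 2) k →+* Polynomial (Polynomial k) :=
  MvPolynomial.eval₂Hom (Polynomial.C.comp Polynomial.C) ![Polynomial.C Polynomial.X, Polynomial.X]

theorem toMv_C {k : Type*} [CommSemiring k] (q : Polynomial k) :
    toMv k (Polynomial.C q) = Polynomial.eval₂ MvPolynomial.C (MvPolynomial.X 0) q := by
  simp [toMv]

theorem toMv_X {k : Type*} [CommSemiring k] :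
    toMv k Polynomial.X = MvPolynomial.X 1 := by
  simp [toMv]

theorem toPP_toMv {k : Type*} [CommSemiring k] (P : Polynomial (Polynomial k)) :
    toPP k (toMv k P) = P := by
  have : (toPP k).comp (toMv k) = RingHom.id _ := by
    apply Polynomial.ringHom_ext
    · intro q
      simp only [RingHom.comp_apply, toMv_C, RingHom.id_apply]
      rw [Polynomial.hom_eval₂]
      have h0 : toPP k (MvPolynomial.X 0) = Polynomial.C Polynomial.X := by
        simp [toPP]
      have hC : (toPP k).comp MvPolynomial.C = Polynomial.C.comp Polynomial.C := by
        ext a; simp [toPP]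
      rw [h0, hC, ← Polynomial.hom_eval₂, Polynomial.eval₂_C_X]
    · simp [toMv_C, toMv_X, toPP]
  exact DFunLike.congr_fun this P

theorem dehom_fermat {k : Type*} [CommSemiring k] (d : ℕ) :
    dehom (fermatPoly k d) = MvPolynomial.X 0 ^ d + MvPolynomial.X 1 ^ d + 1 := by
  simp [dehom, fermatPoly]

theorem aeval_dehom_fermat {k K : Type*} [CommSemiring k] [CommSemiring K] [Algebra k K]
    (d : ℕ) (x y : K) :
    MvPolynomial.aeval ![x, y] (dehom (fermatPoly k d)) = x ^ d + y ^ d + 1 := by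
  simp [dehom_fermat]

section main
variable {k K : Type*} [Field k] [Field K] [Algebra k K] {d : ℕ} {x y : K}

theorem toPP_dehom_fermat (k : Type*) [Field k] (d : ℕ) :
    toPP k (dehom (fermatPoly k d)) =
      Polynomial.X ^ d + Polynomial.C (Polynomial.X ^ d + 1) := by
  simp only [dehom_fermat, toPP, map_add, map_pow, map_one, MvPolynomial.eval₂Hom_X']
  simp only [Matrix.cons_val_zero, Matrix.cons_val_one, Matrix.head_cons, ← Polynomial.C_pow,
    map_add, map_one]
  ring

theorem keyA (hd : 3 ≤ d)
    (hff : IsFunctionFieldOf k (fermatPoly k d) x y)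
    {P : Polynomial (Polynomial k)} (hP : P ≠ 0) (hdeg : P.natDegree < d) :
    MvPolynomial.aeval ![x, y] (toMv k P) ≠ 0 := by
  intro h0
  have hf : dehom (fermatPoly k d) ∣ toMv k P := (hff.2 _).mp h0
  have h2 : toPP k (dehom (fermatPoly k d)) ∣ P := by
    have := map_dvd (toPP k) hf
    rwa [toPP_toMv] at this
  rw [toPP_dehom_fermat] at h2
  have h3 := Polynomial.natDegree_le_of_dvd h2 hP
  rw [Polynomial.natDegree_X_pow_add_C] at h3
  omega

theorem aeval_toMv_C (q : Polynomial k) :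
    MvPolynomial.aeval ![x, y] (toMv k (Polynomial.C q)) = Polynomial.aeval x q := by
  rw [toMv_C]
  have h := Polynomial.hom_eval₂ q MvPolynomial.C
    ((MvPolynomial.aeval (R := k) ![x, y]).toRingHom) (MvPolynomial.X 0)
  simp only [AlgHom.toRingHom_eq_coe, AlgHom.coe_ringHom_mk, RingHom.coe_coe] at h
  rw [h, Polynomial.aeval_def]
  congr 1
  · ext a; simp
  · simp

theorem trans_x (hd : 3 ≤ d)
    (hff : IsFunctionFieldOf k (fermatPoly k d) x y)
    {q : Polynomial k} (hq : q ≠ 0) : Polynomial.aeval x q ≠ 0 := by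
  have := keyA hd hff (P := Polynomial.C q) (by simpa using hq)
    (by simp only [Polynomial.natDegree_C]; omega)
  rwa [aeval_toMv_C] at this

theorem fermat_rel (hff : IsFunctionFieldOf k (fermatPoly k d) x y) :
    x ^ d + y ^ d + 1 = 0 := by
  have := (hff.2 (dehom (fermatPoly k d))).mpr dvd_rfl
  rwa [aeval_dehom_fermat] at this

theorem y_ne_zero (hd : 3 ≤ d) (hff : IsFunctionFieldOf k (fermatPoly k d) x y) :
    y ≠ 0 := by
  intro h
  have h1 := fermat_rel hff
  rw [h, zero_pow (by omega : d ≠ 0), add_zero] at h1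
  exact trans_x hd hff (Polynomial.X_pow_add_C_ne_zero (by omega : 0 < d) (1 : k))
    (by simpa using h1)

theorem aeval_y_min (hd : 3 ≤ d) (hff : IsFunctionFieldOf k (fermatPoly k d) x y)
    {q : Polynomial (IntermediateField.adjoin k ({x} : Set K))}
    (hq : q.natDegree < d) (h0 : Polynomial.aeval y q = 0) : q = 0 := by
  classical
  have hsmul : ∀ (a : IntermediateField.adjoin k ({x} : Set K)) (z : K),
      a • z = (a : K) * z := fun a z => by
    rw [Algebra.smul_def, IntermediateField.algebraMap_apply]
  have hrep : ∀ i : ℕ, ∃ rs : Polynomial k × Polynomial k, rs.2 ≠ 0 ∧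
      ((q.coeff i : K) * Polynomial.aeval x rs.2 = Polynomial.aeval x rs.1) := by
    intro i
    have hm := (q.coeff i).2
    rw [IntermediateField.mem_adjoin_simple_iff] at hm
    obtain ⟨r, s, hrs⟩ := hm
    by_cases hsx : Polynomial.aeval x s = 0
    · refine ⟨(0, 1), one_ne_zero, ?_⟩
      rw [hrs, hsx, div_zero]; simp
    · refine ⟨(r, s), fun h => hsx (by rw [show s = 0 from h]; simp), ?_⟩
      rw [hrs, div_mul_cancel₀ _ hsx]
  choose rs hs hval using hrep
  set P : Polynomial (Polynomial k) :=
    ∑ i ∈ Finset.range d, Polynomial.C ((rs i).1 * ∏ j ∈ (Finset.range d).erase i, (rs j).2) *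
      Polynomial.X ^ i with hP
  have hsum : ∑ i ∈ Finset.range d, (q.coeff i : K) * y ^ i = 0 := by
    have h := Polynomial.aeval_eq_sum_range' hq y
    rw [h0] at h
    rw [Finset.sum_congr rfl (fun i _ => (hsmul (q.coeff i) (y ^ i)).symm)]
    exact h.symm
  have heval : MvPolynomial.aeval ![x, y] (toMv k P) = 0 := by
    rw [hP, map_sum, map_sum]
    have hterm : ∀ i ∈ Finset.range d,
        MvPolynomial.aeval ![x, y] (toMv k
          (Polynomial.C ((rs i).1 * ∏ j ∈ (Finset.range d).erase i, (rs j).2) *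
            Polynomial.X ^ i))
          = (q.coeff i : K) *
            ((∏ j ∈ Finset.range d, Polynomial.aeval x (rs j).2) * y ^ i) := by
      intro i hi
      rw [map_mul, map_pow, toMv_X, map_mul, map_pow, aeval_toMv_C, MvPolynomial.aeval_X]
      have h1 : (![x, y] 1 : K) = y := rfl
      rw [h1, map_mul, map_prod, ← hval i,
        ← Finset.mul_prod_erase (Finset.range d) (fun j => Polynomial.aeval x (rs j).2) hi]
      ring
    rw [Finset.sum_congr rfl hterm]
    calc ∑ i ∈ Finset.range d, (q.coeff i : K) *
          ((∏ j ∈ Finset.range d, Polynomial.aeval x (rs j).2) * y ^ i)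
        = (∏ j ∈ Finset.range d, Polynomial.aeval x (rs j).2) *
          ∑ i ∈ Finset.range d, (q.coeff i : K) * y ^ i := by
          rw [Finset.mul_sum]
          exact Finset.sum_congr rfl fun i _ => by ring
      _ = 0 := by rw [hsum, mul_zero]
  have hdegP : P.natDegree < d := by
    have h1 : P.natDegree ≤ d - 1 := by
      rw [hP]
      refine Polynomial.natDegree_sum_le_of_forall_le _ _ (fun i hi => ?_)
      exact le_trans (Polynomial.natDegree_C_mul_X_pow_le _ _)
        (by have := Finset.mem_range.mp hi; omega)
    omega
  have hP0 : P = 0 := by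
    by_contra hne
    exact keyA hd hff hne hdegP heval
  have hri : ∀ i, i < d → (rs i).1 = 0 := by
    intro i hid
    have h := congrArg (fun p : Polynomial (Polynomial k) => p.coeff i) hP0
    simp only [hP, Polynomial.finset_sum_coeff, Polynomial.coeff_C_mul, Polynomial.coeff_X_pow,
      Polynomial.coeff_zero, mul_ite, mul_one, mul_zero, Finset.sum_ite_eq, Finset.sum_ite_eq',
      Finset.mem_range, hid, if_true] at h
    rcases mul_eq_zero.mp h with h' | h'
    · exact h'
    · exact absurd h' (Finset.prod_ne_zero_iff.mpr (fun j _ => hs j))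
  have hc0 : ∀ i, i < d → q.coeff i = 0 := by
    intro i hid
    have h := hval i
    rw [hri i hid] at h
    simp only [map_zero] at h
    have hsx := trans_x hd hff (hs i)
    have hco : (q.coeff i : K) = 0 := by
      rcases mul_eq_zero.mp h with h' | h'
      · exact h'
      · exact absurd h' hsx
    exact_mod_cast hco
  ext n
  rcases lt_or_ge n d with hn | hn
  · simpa using hc0 n hn
  · simp [Polynomial.coeff_eq_zero_of_natDegree_lt (lt_of_lt_of_le hq hn)]

theorem fermat_irred (hd : 3 ≤ d) (hff : IsFunctionFieldOf k (fermatPoly k d) x y) :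
    Irreducible (dehom (fermatPoly k d)) := by
  have hne : dehom (fermatPoly k d) ≠ 0 := by
    intro h
    have h2 := congrArg (toPP k) h
    rw [toPP_dehom_fermat, map_zero] at h2
    exact Polynomial.X_pow_add_C_ne_zero (by omega : 0 < d) _ h2
  have hpr : Prime (dehom (fermatPoly k d)) := by
    refine ⟨hne, ?_, ?_⟩
    · intro hu
      have h1 := (hff.2 1).mpr hu.dvd
      simp at h1
    · intro a b hab
      have h := (hff.2 (a * b)).mpr hab
      rw [map_mul] at h
      rcases mul_eq_zero.mp h with h | h
      · exact Or.inl ((hff.2 a).mp h)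
      · exact Or.inr ((hff.2 b).mp h)
  exact hpr.irreducible

end main

theorem fermat_galois {k K : Type*} [Field k] [IsAlgClosed k] [CharZero k] [Field K]
    [Algebra k K] {d : ℕ} (hd : 3 ≤ d) {x y : K}
    (hff : IsFunctionFieldOf k (fermatPoly k d) x y) :
    IsGalois (IntermediateField.adjoin k ({x} : Set K)) K ∧
    Module.finrank (IntermediateField.adjoin k ({x} : Set K)) K = d ∧
    IsCyclic (IntermediateField.adjoin k ({x} : Set K)).fixingSubgroup := by
  classical
  haveI : CharZero K := charZero_of_injective_algebraMap (algebraMap k K).injective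
  set Fx := IntermediateField.adjoin k ({x} : Set K) with hFxdef
  haveI : CharZero Fx := ⟨fun a b h => by
    have h2 := congrArg (algebraMap Fx K) h
    rw [map_natCast, map_natCast] at h2
    exact Nat.cast_injective h2⟩
  have hx : x ∈ Fx := IntermediateField.mem_adjoin_simple_self k x
  set α : Fx := ⟨-(x ^ d + 1), neg_mem (add_mem (pow_mem hx d) (one_mem _))⟩ with hα
  have hαK : (algebraMap Fx K) α = -(x ^ d + 1) := rfl
  set p : Polynomial Fx := Polynomial.X ^ d - Polynomial.C α with hp
  have hmonic : p.Monic := Polynomial.monic_X_pow_sub_C α (by omega : d ≠ 0)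
  have hyd : y ^ d = -(x ^ d + 1) := by
    have h := fermat_rel hff; linear_combination h
  have hroot : Polynomial.aeval y p = 0 := by
    rw [hp, map_sub, map_pow, Polynomial.aeval_X, Polynomial.aeval_C, hαK, hyd]
    ring
  have hint : IsIntegral Fx y := ⟨p, hmonic, by rwa [← Polynomial.aeval_def]⟩
  have hdvd : minpoly Fx y ∣ p := minpoly.dvd _ _ hroot
  have hndp : p.natDegree = d := Polynomial.natDegree_X_pow_sub_C
  have hnd : (minpoly Fx y).natDegree = d := by
    have hle : (minpoly Fx y).natDegree ≤ d :=
      hndp ▸ Polynomial.natDegree_le_of_dvd hdvd hmonic.ne_zero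
    rcases lt_or_eq_of_le hle with hlt | he
    · exact absurd (aeval_y_min hd hff hlt (minpoly.aeval Fx y)) (minpoly.ne_zero hint)
    · exact he
  have hpq : p = minpoly Fx y :=
    Polynomial.eq_of_monic_of_dvd_of_natDegree_le (minpoly.monic hint) hmonic hdvd
      (by rw [hndp, hnd])
  -- K = Fx(y)
  have htop : IntermediateField.adjoin Fx {y} = ⊤ := by
    apply IntermediateField.restrictScalars_injective k
    rw [IntermediateField.restrictScalars_top, eq_top_iff, ← hff.1,
      IntermediateField.adjoin_le_iff]
    rintro z hz
    rcases hz with rfl | hz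
    · exact (IntermediateField.adjoin Fx {y}).algebraMap_mem ⟨z, hx⟩
    · rcases hz with rfl
      exact IntermediateField.subset_adjoin Fx {z} rfl
  haveI hfd : FiniteDimensional Fx K := by
    have h1 : FiniteDimensional Fx (IntermediateField.adjoin Fx {y}) :=
      IntermediateField.adjoin.finiteDimensional hint
    rw [htop] at h1
    exact (IntermediateField.topEquiv (F := Fx) (E := K)).toLinearEquiv.finiteDimensional
  have hfin : Module.finrank Fx K = d := by
    have h1 := IntermediateField.adjoin.finrank hint
    rw [htop, hnd, IntermediateField.finrank_top'] at h1
    exact h1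
  -- splitting
  haveI : NeZero (d : k) := ⟨Nat.cast_ne_zero.mpr (by omega)⟩
  obtain ⟨ζ, hζ⟩ := HasEnoughRootsOfUnity.exists_primitiveRoot k d
  have hζK : IsPrimitiveRoot (algebraMap k K ζ) d :=
    hζ.map_of_injective (algebraMap k K).injective
  have hmap : p.map (algebraMap Fx K) = Polynomial.X ^ d - Polynomial.C (y ^ d) := by
    rw [hp, Polynomial.map_sub, Polynomial.map_pow, Polynomial.map_X, Polynomial.map_C,
      hαK, hyd]
  have hprod := X_pow_sub_C_eq_prod hζK (by omega : 0 < d) (rfl : y ^ d = y ^ d)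
  have hsplits : Polynomial.Splits (p.map (algebraMap Fx K)) := by
    rw [hmap, hprod]
    exact Polynomial.Splits.prod (fun i _ => Polynomial.Splits.X_sub_C _)
  have hadj_alg : Algebra.adjoin Fx ({y} : Set K) = ⊤ := by
    have h := IntermediateField.adjoin_simple_toSubalgebra_of_isAlgebraic hint.isAlgebraic
    rw [htop, IntermediateField.top_toSubalgebra] at h
    exact h.symm
  have hsf : p.IsSplittingField Fx K := by
    refine ⟨hsplits, ?_⟩
    rw [eq_top_iff, ← hadj_alg]
    apply Algebra.adjoin_mono
    rintro z rfl
    rw [Polynomial.mem_rootSet]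
    exact ⟨hmonic.ne_zero, hroot⟩
  haveI : IsGalois Fx K := by
    haveI := hsf
    have hsep : p.Separable := by
      have hirr : Irreducible p := by rw [hpq]; exact minpoly.irreducible hint
      exact hirr.separable
    exact IsGalois.of_separable_splitting_field hsep
  -- cyclic Galois group
  have hy0 : y ≠ 0 := y_ne_zero hd hff
  have hmem_k : ∀ c : K, c ^ d = 1 → ∃ c0 : k, algebraMap k K c0 = c := by
    intro c hc
    have hic : IsIntegral k c := by
      refine ⟨Polynomial.X ^ d - Polynomial.C 1, Polynomial.monic_X_pow_sub_C 1
        (by omega : d ≠ 0), ?_⟩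
      rw [← Polynomial.aeval_def]
      simp [hc]
    have hdeg1 := IsAlgClosed.degree_eq_one_of_irreducible k (minpoly.irreducible hic)
    have hnd1 : (minpoly k c).natDegree = 1 := Polynomial.natDegree_eq_of_degree_eq_some hdeg1
    have heq := Polynomial.eq_X_add_C_of_natDegree_le_one (le_of_eq hnd1)
    have hc1 : (minpoly k c).coeff 1 = 1 := by
      have h3 := (minpoly.monic hic).coeff_natDegree
      rwa [hnd1] at h3
    have h4 := minpoly.aeval k c
    rw [heq, hc1] at h4
    simp only [map_add, map_mul, Polynomial.aeval_C, Polynomial.aeval_X, map_one, one_mul] at h4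
    exact ⟨-((minpoly k c).coeff 0), by
      rw [map_neg]; exact (eq_neg_of_add_eq_zero_left h4).symm⟩
  have hfix : ∀ (σ : K ≃ₐ[Fx] K) (c0 : k), σ (algebraMap k K c0) = algebraMap k K c0 := by
    intro σ c0
    rw [IsScalarTower.algebraMap_apply k Fx K]
    exact σ.commutes _
  have hσy0 : ∀ σ : K ≃ₐ[Fx] K, σ y ≠ 0 := fun σ h =>
    hy0 (σ.injective (by rw [h, map_zero]))
  have hrootu : ∀ σ : K ≃ₐ[Fx] K, (σ y / y) ^ d = 1 := by
    intro σ
    have h1 : σ (y ^ d) = y ^ d := by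
      rw [hyd, ← hαK]
      exact σ.commutes α
    rw [div_pow, ← map_pow, h1, div_self (pow_ne_zero d hy0)]
  have hmul : ∀ σ τ : K ≃ₐ[Fx] K, (σ * τ) y / y = (σ y / y) * (τ y / y) := by
    intro σ τ
    obtain ⟨c0, hc0⟩ := hmem_k (τ y / y) (hrootu τ)
    have hτ : τ y = algebraMap k K c0 * y := by
      rw [hc0, div_mul_cancel₀ _ hy0]
    calc (σ * τ) y / y = σ (τ y) / y := rfl
      _ = (algebraMap k K c0 * σ y) / y := by rw [hτ, map_mul, hfix σ c0]
      _ = (σ y / y) * (τ y / y) := by rw [← hc0]; ring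
  let χ : (K ≃ₐ[Fx] K) →* Kˣ :=
    { toFun := fun σ => Units.mk0 (σ y / y) (div_ne_zero (hσy0 σ) hy0)
      map_one' := by
        ext
        simp [div_self hy0]
      map_mul' := fun σ τ => by
        ext
        exact hmul σ τ }
  have hχinj : Function.Injective χ := by
    rw [injective_iff_map_eq_one]
    intro σ hσ
    have hσy : σ y = y := by
      have h1 : σ y / y = 1 := congrArg Units.val hσ
      field_simp at h1
      exact h1
    have heq : ∀ z : K, σ z = z := by
      intro z
      have hz : z ∈ Algebra.adjoin Fx ({y} : Set K) := hadj_alg ▸ Algebra.mem_top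
      induction hz using Algebra.adjoin_induction with
      | mem w hw => rw [Set.mem_singleton_iff.mp hw]; exact hσy
      | algebraMap r => exact σ.commutes r
      | add u v _ _ hu hv => rw [map_add, hu, hv]
      | mul u v _ _ hu hv => rw [map_mul, hu, hv]
    exact AlgEquiv.ext heq
  haveI : Finite (K ≃ₐ[Fx] K) := Finite.of_fintype _
  have hcyc : IsCyclic (K ≃ₐ[Fx] K) :=
    isCyclic_of_subgroup_isDomain ((Units.coeHom K).comp χ)
      (fun a b h => hχinj (Units.ext h))
  have hcyc2 : IsCyclic Fx.fixingSubgroup :=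
    isCyclic_of_surjective (IntermediateField.fixingSubgroupEquiv Fx).symm
      (IntermediateField.fixingSubgroupEquiv Fx).symm.surjective
  exact ⟨inferInstance, hfin, hcyc2⟩


/-- The polynomial `x^d + y^d + 1` is irreducible, and the point `(0:1:0)` is
an outer Galois point for the Fermat curve of degree `d ≥ 3`: the extension `K/k(x)` of the
function field `K = Frac(k[x,y]/(x^d+y^d+1))` over `k(x)` is Galois of degree `d` with cyclic
Galois group. -/
theorem fermat_outer_galois_point_x
    {k K : Type*} [Field k] [IsAlgClosed k] [CharZero k] [Field K] [Algebra k K]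
    (d : ℕ) (hd : 3 ≤ d) (x y : K)
    (hff : IsFunctionFieldOf k (fermatPoly k d) x y) :
    Irreducible (dehom (fermatPoly k d)) ∧
    IsGalois (IntermediateField.adjoin k ({x} : Set K)) K ∧
    Module.finrank (IntermediateField.adjoin k ({x} : Set K)) K = d ∧
    IsCyclic (galGroup k x) := by
  obtain ⟨h1, h2, h3⟩ := fermat_galois hd hff
  exact ⟨fermat_irred hd hff, h1, h2, h3⟩
end

section
/- Let k be an algebraically closed field of characteristic zero and let d ≥ 3. Let K := Frac(k[x,y]/(x^d + y^d + 1)) be the function field of the Fermat curve X^d + Y^d + Z^d = 0, and let u := x/y ∈ K. Then the extension K/k(u) is a Galois extension of degree d with cyclic Galois group. (Equivalently: the point (0:0:1) is an outer Galois point for the Fermat curve of degree d; together with the analogous statements for (1:0:0) and (0:1:0), the Fermat curve has three non-collinear outer Galois points.) -/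
open MvPolynomial

open Polynomial in
private lemma fermat_eisenstein_aux {k : Type*} [Field k] [IsAlgClosed k] [CharZero k]
    {d : ℕ} (hd : 3 ≤ d) :
    Irreducible ((Polynomial.X : (Polynomial k)[X]) ^ d + Polynomial.C (Polynomial.X ^ d + 1)) := by
  have hd0 : 0 < d := by omega
  obtain ⟨ζ, hζ⟩ := IsAlgClosed.exists_pow_nat_eq (-1 : k) hd0
  have hζ0 : ζ ≠ 0 := by
    intro h; rw [h, zero_pow hd0.ne'] at hζ; exact one_ne_zero (neg_eq_zero.mp hζ.symm)
  set P : Ideal (Polynomial k) := Ideal.span {Polynomial.X - Polynomial.C ζ} with hP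
  have hprime : P.IsPrime := by
    rw [hP, Ideal.span_singleton_prime (Polynomial.X_sub_C_ne_zero ζ)]
    exact Polynomial.prime_X_sub_C ζ
  have hmem : (Polynomial.X ^ d + 1 : Polynomial k) ∈ P := by
    rw [hP, Ideal.mem_span_singleton, Polynomial.dvd_iff_isRoot]
    simp [Polynomial.IsRoot, hζ]
  have hdegC : ((Polynomial.C (Polynomial.X ^ d + 1) : (Polynomial k)[X])).degree < (d : WithBot ℕ) :=
    degree_C_le.trans_lt (by exact_mod_cast hd0)
  have hmonic : ((Polynomial.X : (Polynomial k)[X]) ^ d + Polynomial.C (Polynomial.X ^ d + 1)).Monic :=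
    Polynomial.monic_X_pow_add hdegC
  have hdeg : ((Polynomial.X : (Polynomial k)[X]) ^ d + Polynomial.C (Polynomial.X ^ d + 1)).degree = (d : WithBot ℕ) :=
    Polynomial.degree_X_pow_add_C hd0 _
  -- coefficients
  have hcoeff : ∀ n : ℕ, n < d → ((Polynomial.X : (Polynomial k)[X]) ^ d + Polynomial.C (Polynomial.X ^ d + 1)).coeff n
      = if n = 0 then Polynomial.X ^ d + 1 else 0 := by
    intro n hn
    rw [Polynomial.coeff_add, Polynomial.coeff_X_pow, Polynomial.coeff_C]
    simp [Nat.ne_of_lt hn]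
  have hsqf : ¬ ((Polynomial.X - Polynomial.C ζ) ^ 2 ∣ (Polynomial.X ^ d + 1 : Polynomial k)) := by
    have hsq : Squarefree (Polynomial.X ^ d - Polynomial.C (-1 : k)) :=
      (Polynomial.separable_X_pow_sub_C (-1 : k)
        (by exact_mod_cast Nat.cast_ne_zero.mpr hd0.ne') (neg_ne_zero.mpr one_ne_zero)).squarefree
    intro hdvd
    have h2 : (Polynomial.X - Polynomial.C ζ) * (Polynomial.X - Polynomial.C ζ)
        ∣ (Polynomial.X ^ d - Polynomial.C (-1 : k)) := by
      rw [← sq]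
      simpa using hdvd
    exact Polynomial.not_isUnit_X_sub_C ζ (hsq _ h2)
  apply Polynomial.irreducible_of_eisenstein_criterion hprime
  · rw [hmonic.leadingCoeff]
    exact fun h => hprime.ne_top (Ideal.eq_top_iff_one _ |>.mpr h)
  · intro n hn
    rw [hdeg] at hn
    have hn' : n < d := by exact_mod_cast hn
    rw [hcoeff n hn']
    split
    · exact hmem
    · exact P.zero_mem
  · rw [hdeg]; exact_mod_cast hd0
  · rw [hcoeff 0 hd0]
    simp only [if_pos rfl]
    rw [hP, Ideal.span_singleton_pow, Ideal.mem_span_singleton]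
    exact hsqf
  · exact hmonic.isPrimitive

open Polynomial in
private lemma fermat_ratfunc_irred {k : Type*} [Field k] [IsAlgClosed k] [CharZero k]
    {d : ℕ} (hd : 3 ≤ d) :
    Irreducible ((Polynomial.X : (RatFunc k)[X]) ^ d
      - Polynomial.C (-(algebraMap (Polynomial k) (RatFunc k) (Polynomial.X ^ d + 1)))) := by
  have hd0 : 0 < d := by omega
  have hmonic : ((Polynomial.X : (Polynomial k)[X]) ^ d + Polynomial.C (Polynomial.X ^ d + 1)).Monic :=
    Polynomial.monic_X_pow_add
      ((Polynomial.degree_C_le).trans_lt (by exact_mod_cast hd0))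
  have h := (hmonic.irreducible_iff_irreducible_map_fraction_map
    (K := RatFunc k)).mp (fermat_eisenstein_aux hd)
  have heq : Polynomial.map (algebraMap (Polynomial k) (RatFunc k))
      ((Polynomial.X : (Polynomial k)[X]) ^ d + Polynomial.C (Polynomial.X ^ d + 1))
      = (Polynomial.X : (RatFunc k)[X]) ^ d
        - Polynomial.C (-(algebraMap (Polynomial k) (RatFunc k) (Polynomial.X ^ d + 1))) := by
    rw [Polynomial.map_add, Polynomial.map_pow, Polynomial.map_X, Polynomial.map_C, map_neg,
      sub_neg_eq_add]
  rwa [heq] at h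

/-- The point `(0:0:1)` is an outer Galois point for the Fermat curve of
degree `d ≥ 3`: with `K = Frac(k[x,y]/(x^d+y^d+1))` the function field of the Fermat curve
and `u = x/y`, the extension `K/k(u)` is Galois of degree `d` with cyclic Galois group. -/
theorem fermat_outer_galois_point_xy
    {k K : Type*} [Field k] [IsAlgClosed k] [CharZero k] [Field K] [Algebra k K]
    (d : ℕ) (hd : 3 ≤ d) (x y : K)
    (hff : IsFunctionFieldOf k (fermatPoly k d) x y) :
    IsGalois (IntermediateField.adjoin k ({x / y} : Set K)) K ∧
    Module.finrank (IntermediateField.adjoin k ({x / y} : Set K)) K = d ∧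
    IsCyclic (galGroup k (x / y)) := by
  have hd0 : 0 < d := by omega
  have hdehom : dehom (fermatPoly k d) = X 0 ^ d + X 1 ^ d + 1 := by
    simp [dehom, fermatPoly]
  -- the relation
  have hrel : x ^ d + y ^ d + 1 = 0 := by
    have := (hff.2 (dehom (fermatPoly k d))).mpr dvd_rfl
    rw [hdehom] at this
    simpa using this
  -- a d-th root of -1
  obtain ⟨ζ, hζ⟩ := IsAlgClosed.exists_pow_nat_eq (-1 : k) hd0
  have hζ0 : ζ ≠ 0 := by
    intro h; rw [h, zero_pow hd0.ne'] at hζ; exact one_ne_zero (neg_eq_zero.mp hζ.symm)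
  -- y ≠ 0
  have hy : y ≠ 0 := by
    intro h0
    have hdvd : dehom (fermatPoly k d) ∣ X 1 := by
      rw [← hff.2]; simp [h0]
    have hdvd2 := map_dvd (MvPolynomial.aeval (R := k)
      (![0, Polynomial.X] : Fin 2 → Polynomial k)) hdvd
    rw [hdehom] at hdvd2
    simp only [map_add, map_pow, aeval_X, map_one] at hdvd2
    norm_num [zero_pow hd0.ne'] at hdvd2
    have := Polynomial.natDegree_le_of_dvd hdvd2 Polynomial.X_ne_zero
    have h1 : (Polynomial.X ^ d + 1 : Polynomial k).natDegree = d := by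
      simpa using Polynomial.natDegree_X_pow_add_C (n := d) (r := (1 : k))
    rw [h1, Polynomial.natDegree_X] at this
    omega
  set u := x / y with hu
  have hxy : x = u * y := (div_mul_cancel₀ x hy).symm
  -- transcendence of u
  have htrans : Transcendental k u := by
    rw [transcendental_iff]
    intro p hp
    by_contra hp0
    set n := p.natDegree with hn
    set g : MvPolynomial (Fin 2) k :=
      ∑ i ∈ Finset.range (n + 1), C (p.coeff i) * X 0 ^ i * X 1 ^ (n - i) with hg
    have haeval : MvPolynomial.aeval ![x, y] g = 0 := by
      rw [hg]
      simp only [map_sum, map_mul, map_pow, aeval_X, aeval_C]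
      have : ∀ i ∈ Finset.range (n + 1),
          algebraMap k K (p.coeff i) * ((![x, y] : Fin 2 → K) 0) ^ i
              * ((![x, y] : Fin 2 → K) 1) ^ (n - i)
            = algebraMap k K (p.coeff i) * u ^ i * y ^ n := by
        intro i hi
        simp only [Matrix.cons_val_zero, Matrix.cons_val_one, Matrix.head_cons]
        rw [Finset.mem_range] at hi
        have hin : i + (n - i) = n := by omega
        have hkey : (u * y) ^ i * y ^ (n - i) = u ^ i * y ^ n := by
          rw [mul_pow, mul_assoc, ← pow_add, hin]
        rw [hxy, mul_assoc, hkey, ← mul_assoc]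
      rw [Finset.sum_congr rfl this, ← Finset.sum_mul]
      have : ∑ i ∈ Finset.range (n + 1), algebraMap k K (p.coeff i) * u ^ i
          = Polynomial.aeval u p := by
        rw [Polynomial.aeval_eq_sum_range]
        simp [Algebra.smul_def]
        rfl
      rw [this, hp, zero_mul]
    have hdvd : dehom (fermatPoly k d) ∣ g := (hff.2 g).mp haeval
    have hdvd2 := map_dvd (MvPolynomial.aeval (R := k)
      (![Polynomial.X, 0] : Fin 2 → Polynomial k)) hdvd
    rw [hdehom, hg] at hdvd2
    simp only [map_add, map_pow, map_sum, map_mul, aeval_X, aeval_C, map_one] at hdvd2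
    norm_num [zero_pow hd0.ne'] at hdvd2
    -- the image of g is C (leadingCoeff) * X^n
    have himg : ∑ i ∈ Finset.range (n + 1),
        Polynomial.C (p.coeff i) * Polynomial.X ^ i * (0:Polynomial k) ^ (n - i)
        = Polynomial.C (p.coeff n) * Polynomial.X ^ n := by
      rw [Finset.sum_eq_single n]
      · simp
      · intro i hi hin
        rw [Finset.mem_range] at hi
        rw [zero_pow (by omega : n - i ≠ 0), mul_zero]
      · intro h; exact absurd (Finset.self_mem_range_succ n) h
    rw [himg] at hdvd2
    -- evaluate at ζ
    obtain ⟨t, ht⟩ := hdvd2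
    have := congrArg (Polynomial.eval ζ) ht
    simp only [Polynomial.eval_mul, Polynomial.eval_add, Polynomial.eval_pow, Polynomial.eval_X,
      Polynomial.eval_one, Polynomial.eval_C, hζ] at this
    norm_num at this
    rcases this with h | h
    · exact (Polynomial.leadingCoeff_ne_zero.mpr hp0) h
    · exact hζ0 h.1
  -- the fibre field F = k(u)
  set F := IntermediateField.adjoin k ({u} : Set K) with hF
  have hginj : Function.Injective (Polynomial.aeval (R := k) u) :=
    transcendental_iff_injective.mp htrans
  set f : RatFunc k →ₐ[k] K := IsFractionRing.liftAlgHom hginj with hf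
  have hrange : f.fieldRange = F :=
    IsFractionRing.liftAlgHom_fieldRange_eq_of_range_eq hginj
      (Algebra.adjoin_singleton_eq_range_aeval k u).symm
  let e : RatFunc k ≃ₐ[k] F :=
    (AlgEquiv.ofInjectiveField f).trans (IntermediateField.equivOfEq hrange)
  have he : ∀ w, algebraMap (↥F) K (e w) = f w := fun w => rfl
  set A₀ : RatFunc k := -(algebraMap (Polynomial k) (RatFunc k) (Polynomial.X ^ d + 1)) with hA₀
  set a : F := e A₀ with ha
  have hfa : algebraMap (↥F) K a = -(u ^ d + 1) := by
    rw [ha, he, hA₀, map_neg]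
    have h2 : f (algebraMap (Polynomial k) (RatFunc k) (Polynomial.X ^ d + 1))
        = Polynomial.aeval (R := k) u (Polynomial.X ^ d + 1) := by
      rw [hf, IsFractionRing.liftAlgHom_apply, IsFractionRing.lift_algebraMap]
      rfl
    rw [h2]
    simp
  -- z = y⁻¹ and its d-th power
  set z : K := y⁻¹ with hz
  have hyd : (u ^ d + 1) * y ^ d = -1 := by
    have h3 : (u * y) ^ d + y ^ d + 1 = 0 := by rw [← hxy]; exact hrel
    rw [mul_pow] at h3
    linear_combination h3
  have hzd : z ^ d = algebraMap (↥F) K a := by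
    rw [hfa, hz, inv_pow]
    have h5 : (-(u ^ d + 1)) * y ^ d = 1 := by linear_combination -hyd
    exact inv_eq_of_mul_eq_one_left h5
  -- irreducibility of X^d - C a over F
  have H : Irreducible (Polynomial.X ^ d - Polynomial.C a) := by
    have h1 := fermat_ratfunc_irred (k := k) hd
    have h4 := (MulEquiv.irreducible_iff
      (Polynomial.mapEquiv (e : RatFunc k ≃+* ↥F))).mpr h1
    rw [Polynomial.mapEquiv_apply, Polynomial.map_sub, Polynomial.map_pow,
      Polynomial.map_X, Polynomial.map_C] at h4
    exact h4
  -- z generates K over F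
  have humem : u ∈ F := by rw [hF]; exact IntermediateField.mem_adjoin_simple_self k u
  have hFz : IntermediateField.adjoin (↥F) {z} = ⊤ := by
    have htop : IntermediateField.restrictScalars k (IntermediateField.adjoin (↥F) {z}) = ⊤ := by
      rw [eq_top_iff, ← hff.1, IntermediateField.adjoin_le_iff]
      have hymem : y ∈ IntermediateField.adjoin (↥F) {z} := by
        have := inv_mem (IntermediateField.mem_adjoin_simple_self F z) (s := IntermediateField.adjoin (↥F) {z})
        rwa [hz, inv_inv] at this
      have humem' : u ∈ IntermediateField.adjoin (↥F) {z} := by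
        have := IntermediateField.algebraMap_mem (IntermediateField.adjoin (↥F) {z}) (⟨u, humem⟩ : ↥F)
        simpa using this
      rintro w hw
      simp only [Set.mem_insert_iff, Set.mem_singleton_iff] at hw
      rcases hw with rfl | rfl
      · rw [hxy]; exact mul_mem humem' hymem
      · exact hymem
    rw [eq_top_iff]
    intro w _
    have hw : w ∈ IntermediateField.restrictScalars k (IntermediateField.adjoin (↥F) {z}) := by rw [htop]; trivial
    exact hw
  have hintz : IsIntegral (↥F) z := by
    refine ⟨Polynomial.X ^ d - Polynomial.C a, Polynomial.monic_X_pow_sub_C a hd0.ne', ?_⟩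
    simp only [Polynomial.eval₂_sub, Polynomial.eval₂_X_pow, Polynomial.eval₂_C]
    rw [hzd, sub_self]
  -- primitive roots
  haveI : NeZero ((d : k)) := ⟨Nat.cast_ne_zero.mpr hd0.ne'⟩
  obtain ⟨ζ₁, hζ₁⟩ := HasEnoughRootsOfUnity.exists_primitiveRoot k d
  have hζF : IsPrimitiveRoot (algebraMap k (↥F) ζ₁) d :=
    hζ₁.map_of_injective (algebraMap k (↥F)).injective
  have hprim : (primitiveRoots d (↥F)).Nonempty :=
    ⟨_, (mem_primitiveRoots hd0).mpr hζF⟩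
  have hζK : IsPrimitiveRoot (algebraMap k K ζ₁) d :=
    hζ₁.map_of_injective (algebraMap k K).injective
  -- splitting field
  haveI hsplit : Polynomial.IsSplittingField (↥F) K (Polynomial.X ^ d - Polynomial.C a) := by
    constructor
    · rw [Polynomial.map_sub, Polynomial.map_pow,
        Polynomial.map_X, Polynomial.map_C]
      exact X_pow_sub_C_splits_of_isPrimitiveRoot hζK hzd
    · rw [eq_top_iff, ← IntermediateField.top_toSubalgebra, ← hFz,
        IntermediateField.adjoin_simple_toSubalgebra_of_isAlgebraic hintz.isAlgebraic]
      apply Algebra.adjoin_mono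
      rw [Set.singleton_subset_iff,
        Polynomial.mem_rootSet_of_ne (Polynomial.X_pow_sub_C_ne_zero hd0 a)]
      simp only [map_sub, map_pow, Polynomial.aeval_X, Polynomial.aeval_C]
      rw [hzd, sub_self]
  haveI : NeZero d := ⟨hd0.ne'⟩
  have hgal : IsGalois (↥F) K := isGalois_of_isSplittingField_X_pow_sub_C hprim H K
  have hfinrank : Module.finrank (↥F) K = d :=
    finrank_of_isSplittingField_X_pow_sub_C hprim H K
  have hcyc : IsCyclic (K ≃ₐ[↥F] K) := isCyclic_of_isSplittingField_X_pow_sub_C hprim H K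
  have hcyc2 : IsCyclic ↥(F.fixingSubgroup) :=
    isCyclic_of_surjective _ (IntermediateField.fixingSubgroupEquiv F).symm.surjective
  exact ⟨hgal, hfinrank, hcyc2⟩
end
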